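/- arXiv:2111.14780 — 2 statements merged into one kernel-verified Lean document; each statement's English description precedes it below -/
import Mathlib

section
/- The sequence generated by the alternating L1-PCA iteration is monotone: if B^{(k+1)} = sgn(X^H unt(X B^{(k)})), then ‖X B^{(k)}‖_* ≤ ‖X B^{(k+1)}‖_* for all k (assuming all relevant matrices X B^{(k)} have full column rank and no entry of X^H unt(X B^{(k)}) vanishes). -/
open Matrix Complex

private lemma cs_aux {n : ℕ} (f g : Fin n → ℂ)
    (hf : ∑ i, ‖f i‖^2 = 1) (hg : ∑ i, ‖g i‖^2 = 1) :
    ‖∑ i, (starRingEnd ℂ) (f i) * g i‖ ≤ 1 := by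
  set x : EuclideanSpace ℂ (Fin n) := WithLp.toLp 2 (fun i => f i) with hx
  set y : EuclideanSpace ℂ (Fin n) := WithLp.toLp 2 (fun i => g i) with hy
  have h := norm_inner_le_norm (𝕜 := ℂ) x y
  rw [PiLp.inner_apply] at h
  simp only [RCLike.inner_apply] at h
  have hnf : ‖x‖ = 1 := by
    rw [EuclideanSpace.norm_eq]
    have : ∀ i, ‖x i‖ = ‖f i‖ := fun i => rfl
    simp only [this, hf]; exact Real.sqrt_one
  have hng : ‖y‖ = 1 := by
    rw [EuclideanSpace.norm_eq]
    have : ∀ i, ‖y i‖ = ‖g i‖ := fun i => rfl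
    simp only [this, hg]; exact Real.sqrt_one
  rw [hnf, hng, one_mul] at h
  have e : ∑ i, (starRingEnd ℂ) (f i) * g i = ∑ i, y.ofLp i * (starRingEnd ℂ) (x.ofLp i) :=
    Finset.sum_congr rfl fun i _ => mul_comm ((starRingEnd ℂ) (f i)) (g i)
  rw [e]
  exact h

private lemma col_norm {D K : ℕ} (A : Matrix (Fin D) (Fin K) ℂ) (i : Fin K)
    (h : (Aᴴ * A) i i = 1) : ∑ n, ‖A n i‖^2 = 1 := by
  have h2 : ((∑ n, (‖A n i‖^2 : ℝ)) : ℂ) = 1 := by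
    rw [← h, Matrix.mul_apply]
    push_cast
    congr 1; funext n
    rw [Matrix.conjTranspose_apply, Complex.star_def, ← Complex.mul_conj']
    ring
  exact_mod_cast h2

private lemma trace_re_le {Dd K : ℕ} (Q A : Matrix (Fin Dd) (Fin K) ℂ)
    (Uu : Matrix (Fin Dd) (Fin K) ℂ) (Vv : Matrix (Fin K) (Fin K) ℂ)
    (dd : Fin K → ℝ)
    (hQ : Qᴴ * Q = 1) (hUu : Uuᴴ * Uu = 1) (hVv : Vvᴴ * Vv = 1)
    (hA : A = Uu * Matrix.diagonal (fun i => (dd i : ℂ)) * Vvᴴ)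
    (hdd : ∀ i, 0 ≤ dd i) :
    (Matrix.trace (Qᴴ * A)).re ≤ ∑ i, dd i := by
  set M : Matrix (Fin K) (Fin K) ℂ := (Q * Vv)ᴴ * Uu with hM
  -- each diagonal entry of M has norm ≤ 1
  have hMle : ∀ i, ‖M i i‖ ≤ 1 := by
    intro i
    have h1 : ((Q * Vv)ᴴ * (Q * Vv)) i i = 1 := by
      rw [conjTranspose_mul, Matrix.mul_assoc, ← Matrix.mul_assoc Qᴴ, hQ, Matrix.one_mul, hVv]
      simp
    have h2 : (Uuᴴ * Uu) i i = 1 := by rw [hUu]; simp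
    have c1 := col_norm (Q * Vv) i h1
    have c2 := col_norm Uu i h2
    have hcs := cs_aux (fun n => (Q * Vv) n i) (fun n => Uu n i) c1 c2
    have heq : M i i = ∑ n, (starRingEnd ℂ) ((Q * Vv) n i) * Uu n i := by
      rw [hM, Matrix.mul_apply]
      simp [Matrix.conjTranspose_apply, Complex.star_def]
    rw [heq]
    exact hcs
  -- trace (Qᴴ A) = trace (M * D)
  have htr : Matrix.trace (Qᴴ * A) = ∑ i, M i i * (dd i : ℂ) := by
    rw [hA]
    have : Qᴴ * (Uu * Matrix.diagonal (fun i => (dd i : ℂ)) * Vvᴴ)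
        = (Qᴴ * Uu * Matrix.diagonal (fun i => (dd i : ℂ))) * Vvᴴ := by
      noncomm_ring [Matrix.mul_assoc]
    rw [this, Matrix.trace_mul_cycle]
    rw [show Vvᴴ * (Qᴴ * Uu) = M by rw [hM, conjTranspose_mul, Matrix.mul_assoc]]
    rw [Matrix.trace]
    congr 1; funext i
    rw [Matrix.diag_apply, Matrix.mul_apply]
    simp [Matrix.diagonal_apply]
  rw [htr]
  rw [Complex.re_sum]
  calc ∑ i, (M i i * (dd i : ℂ)).re ≤ ∑ i, dd i := by
        apply Finset.sum_le_sum
        intro i _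
        have : (M i i * (dd i : ℂ)).re ≤ ‖M i i * (dd i : ℂ)‖ := Complex.re_le_norm _
        refine this.trans ?_
        rw [norm_mul, Complex.norm_real, Real.norm_of_nonneg (hdd i)]
        calc ‖M i i‖ * dd i ≤ 1 * dd i := by
              exact mul_le_mul_of_nonneg_right (hMle i) (hdd i)
          _ = dd i := one_mul _

/-- Monotonicity of the alternating L1-PCA iteration: if
`B^{(p+1)} = sgn(Xᴴ unt(X B^{(p)}))`, where `X B^{(p)} = U_p D_p V_pᴴ` is a thin SVD
with positive singular values `d p`, `unt(X B^{(p)}) = U_p V_pᴴ`, all entries of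
`B^{(p)}` are unimodular, and no entry of `Xᴴ unt(X B^{(p)})` vanishes, then the
nuclear norms `‖X B^{(p)}‖_* = Σᵢ d p i` are nondecreasing in `p`. -/
theorem stmt8 {D N K : ℕ} (X : Matrix (Fin D) (Fin N) ℂ)
    (B : ℕ → Matrix (Fin N) (Fin K) ℂ)
    (U : ℕ → Matrix (Fin D) (Fin K) ℂ) (V : ℕ → Matrix (Fin K) (Fin K) ℂ)
    (d : ℕ → Fin K → ℝ)
    (hU : ∀ p, (U p)ᴴ * U p = 1) (hV : ∀ p, (V p)ᴴ * V p = 1)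
    (hd : ∀ p i, 0 < d p i)
    (hSVD : ∀ p, X * B p = U p * Matrix.diagonal (fun i => (d p i : ℂ)) * (V p)ᴴ)
    (hmod : ∀ p i j, ‖B p i j‖ = 1)
    (hnz : ∀ p i j, (Xᴴ * (U p * (V p)ᴴ)) i j ≠ 0)
    (hrec : ∀ p, B (p + 1) = Matrix.of fun i j =>
      (Xᴴ * (U p * (V p)ᴴ)) i j / (‖(Xᴴ * (U p * (V p)ᴴ)) i j‖ : ℂ)) :
    ∀ p, ∑ i, d p i ≤ ∑ i, d (p + 1) i := by
  intro p
  set Q : Matrix (Fin D) (Fin K) ℂ := U p * (V p)ᴴ with hQdef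
  set W : Matrix (Fin N) (Fin K) ℂ := Xᴴ * Q with hWdef
  have hQ : Qᴴ * Q = 1 := by
    rw [hQdef, conjTranspose_mul, conjTranspose_conjTranspose, Matrix.mul_assoc,
      ← Matrix.mul_assoc (U p)ᴴ, hU p, Matrix.one_mul]
    exact mul_eq_one_comm.mp (hV p)
  -- generic trace formula
  have htr : ∀ B' : Matrix (Fin N) (Fin K) ℂ,
      Matrix.trace (Qᴴ * (X * B')) = ∑ j, ∑ n, (starRingEnd ℂ) (W n j) * B' n j := by
    intro B'
    have h0 : Wᴴ = Qᴴ * X := by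
      rw [hWdef]; rw [conjTranspose_mul]; rw [conjTranspose_conjTranspose]
    have h1 : Qᴴ * (X * B') = Wᴴ * B' := by
      rw [h0, Matrix.mul_assoc]
    rw [h1]
    simp [Matrix.trace, Matrix.diag, Matrix.mul_apply, Matrix.conjTranspose_apply,
      Complex.star_def]
  -- Step 1 : equality for p
  have hstep1 : ∑ i, d p i = (Matrix.trace (Qᴴ * (X * B p))).re := by
    have h2 : Qᴴ * (X * B p) = V p * Matrix.diagonal (fun i => (d p i : ℂ)) * (V p)ᴴ := by
      rw [hSVD p, hQdef, conjTranspose_mul, conjTranspose_conjTranspose]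
      calc V p * (U p)ᴴ * (U p * Matrix.diagonal (fun i => (d p i : ℂ)) * (V p)ᴴ)
          = V p * ((U p)ᴴ * U p) * Matrix.diagonal (fun i => (d p i : ℂ)) * (V p)ᴴ := by
            noncomm_ring [Matrix.mul_assoc]
        _ = V p * Matrix.diagonal (fun i => (d p i : ℂ)) * (V p)ᴴ := by
            rw [hU p, Matrix.mul_one]
    rw [h2, Matrix.trace_mul_cycle, hV p, Matrix.one_mul, Matrix.trace_diagonal]
    rw [Complex.re_sum]
    simp
  -- Step 2 : inequality to sum of norms
  have hstep2 : (Matrix.trace (Qᴴ * (X * B p))).re ≤ ∑ j, ∑ n, ‖W n j‖ := by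
    rw [htr (B p), Complex.re_sum]
    apply Finset.sum_le_sum
    intro j _
    rw [Complex.re_sum]
    apply Finset.sum_le_sum
    intro n _
    calc ((starRingEnd ℂ) (W n j) * B p n j).re
        ≤ ‖(starRingEnd ℂ) (W n j) * B p n j‖ := Complex.re_le_norm _
      _ = ‖W n j‖ := by rw [norm_mul, RCLike.norm_conj, hmod p n j, mul_one]
  -- Step 3 : sum of norms equals next trace
  have hstep3 : (∑ j, ∑ n, ‖W n j‖ : ℝ) = (Matrix.trace (Qᴴ * (X * B (p+1)))).re := by
    rw [htr (B (p+1)), Complex.re_sum]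
    refine Finset.sum_congr rfl fun j _ => ?_
    rw [Complex.re_sum]
    refine Finset.sum_congr rfl fun n _ => ?_
    have hB : B (p+1) n j = W n j / (‖W n j‖ : ℂ) := by rw [hrec p]; rfl
    have hw : W n j ≠ 0 := hnz p n j
    have hwn : (‖W n j‖ : ℂ) ≠ 0 := by
      exact_mod_cast Complex.ofReal_ne_zero.mpr (norm_ne_zero_iff.mpr hw)
    have : (starRingEnd ℂ) (W n j) * B (p+1) n j = (‖W n j‖ : ℂ) := by
      rw [hB]
      rw [mul_div_assoc']
      rw [mul_comm, Complex.mul_conj']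
      rw [div_eq_iff hwn]
      ring
    rw [this]
    simp
  -- Step 4 : final inequality
  have hstep4 : (Matrix.trace (Qᴴ * (X * B (p+1)))).re ≤ ∑ i, d (p+1) i :=
    trace_re_le Q (X * B (p+1)) (U (p+1)) (V (p+1)) (d (p+1)) hQ (hU (p+1)) (hV (p+1))
      (hSVD (p+1)) (fun i => (hd (p+1) i).le)
  linarith [hstep1, hstep2, hstep3, hstep4]
end

section
/- For fixed orthonormal-column matrices M_i ∈ ℂ^{I_i×R_i} (M_i^H M_i = I), the core tensor minimizing ‖𝒳 − 𝒞 ×_1 M_1 ⋯ ×_m M_m‖_F over all 𝒞 ∈ ℂ^{R_1×⋯×R_m} is 𝒞* = 𝒳 ×_1 M_1^H ⋯ ×_m M_m^H, and with this choice ‖𝒳 − 𝒞* ×_1 M_1 ⋯ ×_m M_m‖_F² = ‖𝒳‖_F² − ‖𝒳 ×_1 M_1^H ⋯ ×_m M_m^H‖_F²; hence minimizing the approximation error over (𝒞, M_1,…,M_m) is equivalent to maximizing ‖𝒳 ×_1 M_1^H ⋯ ×_m M_m^H‖_F over the M_i. -/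
open Finset

section aux
variable {α β : Type*} [DecidableEq β] (SI : Finset α) (SR : Finset β)
  (w : α → β → ℂ) (X : α → ℂ) (C : β → ℂ)

private lemma key_h2 :
    ∑ a ∈ SI, (starRingEnd ℂ) (X a) * (∑ j ∈ SR, w a j * C j)
      = ∑ j ∈ SR, (starRingEnd ℂ) (∑ a ∈ SI, (starRingEnd ℂ) (w a j) * X a) * C j := by
  simp only [Finset.mul_sum, map_sum, map_mul, RingHomCompTriple.comp_apply,
    RingHom.id_apply, Finset.sum_mul]
  rw [Finset.sum_comm]
  exact Finset.sum_congr rfl fun j _ => Finset.sum_congr rfl fun a _ => by ring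

private lemma key_h1
    (hw : ∀ j ∈ SR, ∀ j' ∈ SR,
      ∑ a ∈ SI, (starRingEnd ℂ) (w a j) * w a j' = if j = j' then 1 else 0) :
    ∑ a ∈ SI, (starRingEnd ℂ) (∑ j ∈ SR, w a j * C j) * (∑ j ∈ SR, w a j * C j)
      = ∑ j ∈ SR, (starRingEnd ℂ) (C j) * C j := by
  have step1 : ∀ a, (starRingEnd ℂ) (∑ j ∈ SR, w a j * C j) * (∑ j ∈ SR, w a j * C j)
      = ∑ j ∈ SR, ∑ j' ∈ SR,
          ((starRingEnd ℂ) (C j) * C j') * ((starRingEnd ℂ) (w a j) * w a j') := by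
    intro a
    rw [map_sum, Finset.sum_mul_sum]
    exact Finset.sum_congr rfl fun j _ => Finset.sum_congr rfl fun j' _ => by
      rw [map_mul]; ring
  calc ∑ a ∈ SI, (starRingEnd ℂ) (∑ j ∈ SR, w a j * C j) * (∑ j ∈ SR, w a j * C j)
      = ∑ j ∈ SR, ∑ j' ∈ SR, ((starRingEnd ℂ) (C j) * C j')
          * ∑ a ∈ SI, (starRingEnd ℂ) (w a j) * w a j' := by
        simp only [step1]
        rw [Finset.sum_comm]
        refine Finset.sum_congr rfl fun j _ => ?_
        rw [Finset.sum_comm]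
        exact Finset.sum_congr rfl fun j' _ => (Finset.mul_sum _ _ _).symm
    _ = ∑ j ∈ SR, (starRingEnd ℂ) (C j) * C j := by
        refine Finset.sum_congr rfl fun j hj => ?_
        rw [Finset.sum_congr rfl (fun j' hj' => by rw [hw j hj j' hj'])]
        simp [Finset.sum_ite_eq, hj]

private lemma key_complex
    (hw : ∀ j ∈ SR, ∀ j' ∈ SR,
      ∑ a ∈ SI, (starRingEnd ℂ) (w a j) * w a j' = if j = j' then 1 else 0) :
    ∑ a ∈ SI, (starRingEnd ℂ) (X a - ∑ j ∈ SR, w a j * C j)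
        * (X a - ∑ j ∈ SR, w a j * C j)
      = ∑ a ∈ SI, (starRingEnd ℂ) (X a) * X a
        - ∑ j ∈ SR, (starRingEnd ℂ) (∑ a ∈ SI, (starRingEnd ℂ) (w a j) * X a)
            * (∑ a ∈ SI, (starRingEnd ℂ) (w a j) * X a)
        + ∑ j ∈ SR, (starRingEnd ℂ)
            ((∑ a ∈ SI, (starRingEnd ℂ) (w a j) * X a) - C j)
            * ((∑ a ∈ SI, (starRingEnd ℂ) (w a j) * X a) - C j) := by
  set A : β → ℂ := fun j => ∑ a ∈ SI, (starRingEnd ℂ) (w a j) * X a with hA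
  have e1 : ∑ a ∈ SI, (starRingEnd ℂ) (X a - ∑ j ∈ SR, w a j * C j)
        * (X a - ∑ j ∈ SR, w a j * C j)
      = ∑ a ∈ SI, (starRingEnd ℂ) (X a) * X a
        - ∑ j ∈ SR, (starRingEnd ℂ) (A j) * C j
        - ∑ j ∈ SR, (starRingEnd ℂ) (C j) * A j
        + ∑ j ∈ SR, (starRingEnd ℂ) (C j) * C j := by
    have expand : ∀ a, (starRingEnd ℂ) (X a - ∑ j ∈ SR, w a j * C j)
          * (X a - ∑ j ∈ SR, w a j * C j)
        = (starRingEnd ℂ) (X a) * X a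
          - (starRingEnd ℂ) (X a) * (∑ j ∈ SR, w a j * C j)
          - (starRingEnd ℂ) (∑ j ∈ SR, w a j * C j) * X a
          + (starRingEnd ℂ) (∑ j ∈ SR, w a j * C j) * (∑ j ∈ SR, w a j * C j) := by
      intro a; rw [map_sub]; ring
    rw [Finset.sum_congr rfl fun a _ => expand a]
    rw [Finset.sum_add_distrib, Finset.sum_sub_distrib, Finset.sum_sub_distrib]
    rw [key_h2 SI SR w X C, key_h1 SI SR w C hw]
    congr 2
    -- ∑ conj (PC) * X = ∑ conj C * A
    have : ∑ a ∈ SI, (starRingEnd ℂ) (∑ j ∈ SR, w a j * C j) * X a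
        = (starRingEnd ℂ) (∑ a ∈ SI, (starRingEnd ℂ) (X a) * (∑ j ∈ SR, w a j * C j)) := by
      rw [map_sum]
      exact Finset.sum_congr rfl fun a _ => by
        rw [map_mul, RingHomCompTriple.comp_apply, RingHom.id_apply]; ring
    rw [this, key_h2 SI SR w X C, map_sum]
    exact Finset.sum_congr rfl fun j _ => by
      rw [map_mul, RingHomCompTriple.comp_apply, RingHom.id_apply]; ring
  rw [e1]
  have e2 : ∑ j ∈ SR, (starRingEnd ℂ) (A j - C j) * (A j - C j)
      = ∑ j ∈ SR, (starRingEnd ℂ) (A j) * A j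
        - ∑ j ∈ SR, (starRingEnd ℂ) (A j) * C j
        - ∑ j ∈ SR, (starRingEnd ℂ) (C j) * A j
        + ∑ j ∈ SR, (starRingEnd ℂ) (C j) * C j := by
    rw [Finset.sum_congr rfl (fun j (_ : j ∈ SR) => by rw [map_sub]; ring :
      ∀ j ∈ SR, (starRingEnd ℂ) (A j - C j) * (A j - C j)
        = (starRingEnd ℂ) (A j) * A j - (starRingEnd ℂ) (A j) * C j
          - (starRingEnd ℂ) (C j) * A j + (starRingEnd ℂ) (C j) * C j)]
    rw [Finset.sum_add_distrib, Finset.sum_sub_distrib, Finset.sum_sub_distrib]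
  rw [e2]; ring

private lemma norm_sq_sum_eq (f : α → ℂ) :
    ∑ a ∈ SI, ‖f a‖ ^ 2 = (∑ a ∈ SI, (starRingEnd ℂ) (f a) * f a).re := by
  rw [Complex.re_sum]
  refine Finset.sum_congr rfl fun a _ => ?_
  rw [Complex.conj_mul']
  simp [← Complex.sq_norm, ← Complex.ofReal_pow]

end aux


/-- The Tucker/multilinear product `𝒞 ×₁ M 1 ×₂ ⋯ ×ₘ M m` of an `m`-th order core
tensor (indexed by `Fin m → ℕ`, with dimensions `R`) with matrices `M i`. -/
noncomputable def tuckerProd {m : ℕ} (R : Fin m → ℕ) (C : (Fin m → ℕ) → ℂ)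
    (M : ∀ _ : Fin m, ℕ → ℕ → ℂ) : (Fin m → ℕ) → ℂ :=
  fun idx => ∑ jdx ∈ Fintype.piFinset (fun i => Finset.range (R i)),
    (∏ i, M i (idx i) (jdx i)) * C jdx

/-- For fixed column-orthonormal factor matrices `M i : I i × R i`, the core
minimizing `‖𝒳 − 𝒞 ×₁ M₁ ⋯ ×ₘ Mₘ‖_F` is `𝒞* = 𝒳 ×₁ M₁ᴴ ⋯ ×ₘ Mₘᴴ`, and then
`‖𝒳 − 𝒞* ×₁ M₁ ⋯ ×ₘ Mₘ‖_F² = ‖𝒳‖_F² − ‖𝒞*‖_F²`. -/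
theorem stmt19 {m : ℕ} (I R : Fin m → ℕ) (X : (Fin m → ℕ) → ℂ)
    (M : ∀ _ : Fin m, ℕ → ℕ → ℂ)
    (hM : ∀ i, ∀ b ∈ Finset.range (R i), ∀ b' ∈ Finset.range (R i),
      ∑ a ∈ Finset.range (I i), star (M i a b) * M i a b' = if b = b' then 1 else 0) :
    (∀ C : (Fin m → ℕ) → ℂ,
      (∑ idx ∈ Fintype.piFinset (fun i => Finset.range (I i)),
        ‖X idx - tuckerProd R (tuckerProd I X (fun i a b => star (M i b a))) M idx‖ ^ 2)
      ≤ ∑ idx ∈ Fintype.piFinset (fun i => Finset.range (I i)),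
          ‖X idx - tuckerProd R C M idx‖ ^ 2) ∧
    (∑ idx ∈ Fintype.piFinset (fun i => Finset.range (I i)),
        ‖X idx - tuckerProd R (tuckerProd I X (fun i a b => star (M i b a))) M idx‖ ^ 2)
      = (∑ idx ∈ Fintype.piFinset (fun i => Finset.range (I i)), ‖X idx‖ ^ 2)
        - ∑ jdx ∈ Fintype.piFinset (fun i => Finset.range (R i)),
            ‖tuckerProd I X (fun i a b => star (M i b a)) jdx‖ ^ 2 := by
  classical
  let SI := Fintype.piFinset (fun i => Finset.range (I i))
  let SR := Fintype.piFinset (fun i => Finset.range (R i))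
  let w : (Fin m → ℕ) → (Fin m → ℕ) → ℂ := fun a j => ∏ i, M i (a i) (j i)
  let A : (Fin m → ℕ) → ℂ := fun j => ∑ a ∈ SI, (starRingEnd ℂ) (w a j) * X a
  have hw : ∀ j ∈ SR, ∀ j' ∈ SR,
      ∑ a ∈ SI, (starRingEnd ℂ) (w a j) * w a j' = if j = j' then 1 else 0 := by
    intro j hj j' hj'
    have h1 : ∀ a : Fin m → ℕ, (starRingEnd ℂ) (w a j) * w a j'
        = ∏ i, ((starRingEnd ℂ) (M i (a i) (j i)) * M i (a i) (j' i)) := by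
      intro a
      show (starRingEnd ℂ) (∏ i, M i (a i) (j i)) * (∏ i, M i (a i) (j' i)) = _
      rw [map_prod, ← Finset.prod_mul_distrib]
    rw [Finset.sum_congr rfl fun a _ => h1 a]
    rw [show SI = Fintype.piFinset (fun i => Finset.range (I i)) from rfl,
      ← Finset.prod_univ_sum (fun i => Finset.range (I i))
        (fun i c => (starRingEnd ℂ) (M i c (j i)) * M i c (j' i))]
    have h2 : ∀ i : Fin m,
        ∑ a ∈ Finset.range (I i), (starRingEnd ℂ) (M i a (j i)) * M i a (j' i)
          = if j i = j' i then 1 else 0 := by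
      intro i
      have := hM i (j i) (Fintype.mem_piFinset.mp hj i) (j' i) (Fintype.mem_piFinset.mp hj' i)
      exact this
    rw [Finset.prod_congr rfl fun i _ => h2 i, Finset.prod_boole]
    by_cases h : j = j'
    · rw [if_pos h, if_pos]
      intro i _
      rw [h]
    · rw [if_neg h, if_neg]
      intro hall
      exact h (funext fun i => hall i (Finset.mem_univ i))
  have hQ : ∀ jdx, tuckerProd I X (fun i a b => star (M i b a)) jdx = A jdx := by
    intro jdx
    refine Finset.sum_congr rfl fun a _ => ?_
    show (∏ i, star (M i (a i) (jdx i))) * X a = (starRingEnd ℂ) (w a jdx) * X a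
    congr 1
    show _ = (starRingEnd ℂ) (∏ i, M i (a i) (jdx i))
    rw [map_prod]
    exact Finset.prod_congr rfl fun i _ => (starRingEnd_apply _).symm
  have main : ∀ C : (Fin m → ℕ) → ℂ,
      ∑ idx ∈ SI, ‖X idx - tuckerProd R C M idx‖ ^ 2
        = ((∑ idx ∈ SI, ‖X idx‖ ^ 2) - ∑ j ∈ SR, ‖A j‖ ^ 2)
          + ∑ j ∈ SR, ‖A j - C j‖ ^ 2 := by
    intro C
    have hkey := key_complex SI SR w X C hw
    have L : ∑ idx ∈ SI, ‖X idx - tuckerProd R C M idx‖ ^ 2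
        = (∑ a ∈ SI, (starRingEnd ℂ) (X a - ∑ j ∈ SR, w a j * C j)
            * (X a - ∑ j ∈ SR, w a j * C j)).re :=
      norm_sq_sum_eq SI _
    rw [L, hkey, Complex.add_re, Complex.sub_re,
      ← norm_sq_sum_eq SI X, ← norm_sq_sum_eq SR A, ← norm_sq_sum_eq SR (fun j => A j - C j)]
  constructor
  · intro C
    rw [show (∑ idx ∈ SI, ‖X idx -
          tuckerProd R (tuckerProd I X (fun i a b => star (M i b a))) M idx‖ ^ 2)
        = _ from main (tuckerProd I X (fun i a b => star (M i b a))), main C]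
    have h0 : ∑ j ∈ SR, ‖A j - tuckerProd I X (fun i a b => star (M i b a)) j‖ ^ 2 = 0 := by
      refine Finset.sum_eq_zero fun j _ => ?_
      rw [hQ j, sub_self, norm_zero]
      norm_num
    rw [h0, add_zero]
    have h1 : (0:ℝ) ≤ ∑ j ∈ SR, ‖A j - C j‖ ^ 2 :=
      Finset.sum_nonneg fun j _ => by positivity
    linarith
  · rw [show (∑ idx ∈ SI, ‖X idx -
          tuckerProd R (tuckerProd I X (fun i a b => star (M i b a))) M idx‖ ^ 2)
        = _ from main (tuckerProd I X (fun i a b => star (M i b a)))]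
    have h0 : ∑ j ∈ SR, ‖A j - tuckerProd I X (fun i a b => star (M i b a)) j‖ ^ 2 = 0 := by
      refine Finset.sum_eq_zero fun j _ => ?_
      rw [hQ j, sub_self, norm_zero]
      norm_num
    rw [h0, add_zero]
    congr 1
    exact Finset.sum_congr rfl fun j _ => by rw [hQ j]
end
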